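/- If M is a complex-matrix-valued measure whose values are positive semidefinite d×d matrices, then for any i, j the total variation measure of the entry measure M_{ij} satisfies |M_{ij}|(ω) ≤ (M_{ii}(ω))^{1/2} · (M_{jj}(ω))^{1/2} for every measurable set ω. -/

import Mathlib

open MeasureTheory Matrix
open scoped ComplexOrder

lemma psd2_abs_le {B : Matrix (Fin 2) (Fin 2) ℂ} (hB : B.PosSemidef) :
    ‖B 0 1‖ ≤ Real.sqrt (B 0 0).re * Real.sqrt (B 1 1).re := by
  set z := B 0 1 with hz
  set m := ‖z‖ with hmdef
  set a := (B 0 0).re with hadef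
  set b := (B 1 1).re with hbdef
  have ha : 0 ≤ a := by
    have h := hB.dotProduct_mulVec_nonneg ![(1:ℂ), 0]
    rw [Complex.le_def] at h
    have he : (star ![(1:ℂ), 0] ⬝ᵥ B *ᵥ ![1, 0]) = B 0 0 := by
      simp [dotProduct, Matrix.mulVec, Fin.sum_univ_two]
    rw [he] at h
    exact h.1
  have hb : 0 ≤ b := by
    have h := hB.dotProduct_mulVec_nonneg ![(0:ℂ), 1]
    rw [Complex.le_def] at h
    have he : (star ![(0:ℂ), 1] ⬝ᵥ B *ᵥ ![0, 1]) = B 1 1 := by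
      simp [dotProduct, Matrix.mulVec, Fin.sum_univ_two]
    rw [he] at h
    exact h.1
  rcases eq_or_ne z 0 with h0 | h0
  · have : m = 0 := by rw [hmdef, h0]; simp
    rw [this]; positivity
  have hm : 0 < m := by rw [hmdef]; exact norm_pos_iff.mpr h0
  have hherm : B 1 0 = (starRingEnd ℂ) z := by
    have h := congrFun (congrFun hB.1 1) 0
    rw [Matrix.conjTranspose_apply, Complex.star_def] at h
    exact h.symm
  set c : ℂ := -(starRingEnd ℂ) z / (m : ℂ) with hcdef
  have hmc : (m : ℂ) ≠ 0 := by exact_mod_cast hm.ne'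
  have hnz : (starRingEnd ℂ) z * z = (m : ℂ) * m := by
    rw [mul_comm, Complex.mul_conj, ← Complex.sq_norm, ← hmdef]
    push_cast; ring
  have hzc : z * c = -(m : ℂ) := by
    rw [hcdef]; field_simp; rw [mul_comm, hnz]; ring
  have hcz : (starRingEnd ℂ) c * (starRingEnd ℂ) z = -(m : ℂ) := by
    have h := congrArg (starRingEnd ℂ) hzc
    simpa [mul_comm] using h
  have hcc : (starRingEnd ℂ) c * c = 1 := by
    rw [hcdef, map_div₀, map_neg, Complex.conj_conj, Complex.conj_ofReal, neg_div, neg_div,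
      neg_mul_neg, div_mul_div_comm, mul_comm z ((starRingEnd ℂ) z), hnz,
      div_self (mul_ne_zero hmc hmc)]
  have hquad : ∀ t : ℝ, 0 ≤ a * (t * t) + (-(2 * m)) * t + b := by
    intro t
    have h := hB.dotProduct_mulVec_nonneg ![(t : ℂ), c]
    rw [Complex.le_def] at h
    have hexp : (star ![(t:ℂ), c] ⬝ᵥ B *ᵥ ![(t:ℂ), c])
        = B 0 0 * t * t + (z * c) * t + ((starRingEnd ℂ) c * (starRingEnd ℂ) z) * t
          + ((starRingEnd ℂ) c * c) * B 1 1 := by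
      simp [dotProduct, Matrix.mulVec, Fin.sum_univ_two, hherm, ← hz,
        Complex.conj_ofReal]
      ring
    rw [hexp, hzc, hcz, hcc] at h
    have h1 := h.1
    simp only [Complex.add_re, Complex.mul_re, Complex.neg_re, Complex.neg_im,
      Complex.ofReal_re, Complex.ofReal_im, Complex.one_re, Complex.one_im,
      Complex.zero_re, ← hadef, ← hbdef] at h1
    nlinarith [h1]
  have hd := discrim_le_zero hquad
  rw [discrim] at hd
  have hm2 : m ^ 2 ≤ a * b := by nlinarith
  calc m ≤ Real.sqrt (a * b) := Real.le_sqrt_of_sq_le hm2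
    _ = Real.sqrt a * Real.sqrt b := Real.sqrt_mul ha b


/-- For a matrix measure `M` (positive-semidefinite-valued, countably
additive), the total variation of the entry measure `M_{ij}` satisfies
`|M_{ij}|(ω) ≤ (M_{ii}(ω))^{1/2} (M_{jj}(ω))^{1/2}`; the total variation on `ω` is the
supremum of `∑ |M_{ij}(ω_s)|` over finite disjoint measurable families inside `ω`. -/
theorem entry_variation_le_sqrt_diag
    {Ω : Type*} [MeasurableSpace Ω] {d : ℕ}
    (M : Set Ω → Matrix (Fin d) (Fin d) ℂ)
    (hadd : ∀ s : ℕ → Set Ω, (∀ n, MeasurableSet (s n)) → Pairwise (Function.onFun Disjoint s) →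
      HasSum (fun n => M (s n)) (M (⋃ n, s n)))
    (hpos : ∀ ω : Set Ω, MeasurableSet ω → (M ω).PosSemidef)
    (i j : Fin d) (ω : Set Ω) (hω : MeasurableSet ω) :
    sSup {r : ℝ | ∃ (n : ℕ) (s : Fin n → Set Ω),
        (∀ k, MeasurableSet (s k)) ∧ (∀ k, s k ⊆ ω) ∧ Pairwise (Function.onFun Disjoint s) ∧
        r = ∑ k, ‖M (s k) i j‖} ≤
      Real.sqrt ((M ω i i).re) * Real.sqrt ((M ω j j).re) := by
  -- diagonal entries have nonneg real part
  have hdiag : ∀ (ν : Set Ω), MeasurableSet ν → ∀ p : Fin d, 0 ≤ (M ν p p).re := by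
    intro ν hν p
    have h := (hpos ν hν).dotProduct_mulVec_nonneg (Pi.single p (1:ℂ))
    rw [Complex.le_def] at h
    have he : (star (Pi.single p 1) ⬝ᵥ (M ν) *ᵥ Pi.single p 1) = M ν p p := by
      simp [dotProduct, Matrix.mulVec, Pi.single_apply, Finset.mul_sum,
        apply_ite, Finset.sum_ite_eq']
    rw [he] at h
    exact h.1
  -- M ∅ = 0
  have hempty : M ∅ = 0 := by
    have h := hadd (fun _ => ∅) (fun _ => MeasurableSet.empty)
      (fun k l _ => by simp [Function.onFun])
    have hc : M (⋃ _ : ℕ, (∅ : Set Ω)) = M ∅ := by simp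
    rw [hc] at h
    have hz : (fun _ : ℕ => M ∅) = fun _ : ℕ => (0 : Matrix (Fin d) (Fin d) ℂ) := by
      funext n
      exact (summable_const_iff _).mp h.summable
    rw [hz] at h
    exact h.unique hasSum_zero
  -- finite additivity
  have hfin : ∀ (n : ℕ) (s : Fin n → Set Ω), (∀ k, MeasurableSet (s k)) →
      Pairwise (Function.onFun Disjoint s) → M (⋃ k, s k) = ∑ k, M (s k) := by
    intro n s hms hds
    set s' : ℕ → Set Ω := fun k => if h : k < n then s ⟨k, h⟩ else ∅ with hs'
    have hms' : ∀ k, MeasurableSet (s' k) := by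
      intro k; rw [hs']; dsimp only; split
      · exact hms _
      · exact MeasurableSet.empty
    have hds' : Pairwise (Function.onFun Disjoint s') := by
      intro k l hkl
      rw [hs']; dsimp only [Function.onFun]
      split <;> split
      · exact hds (by simpa [Fin.ext_iff] using hkl)
      all_goals simp
    have hU : (⋃ k, s' k) = ⋃ k, s k := by
      ext x
      simp only [Set.mem_iUnion, hs']
      constructor
      · rintro ⟨k, hk⟩
        by_cases h : k < n
        · exact ⟨⟨k, h⟩, by simpa [h] using hk⟩
        · simp [h] at hk
      · rintro ⟨k, hk⟩
        exact ⟨k, by simpa [k.isLt] using hk⟩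
    have h := hadd s' hms' hds'
    rw [hU] at h
    have h2 : HasSum (fun k => M (s' k)) (∑ k ∈ Finset.range n, M (s' k)) := by
      apply hasSum_sum_of_ne_finset_zero
      intro k hk
      have hn : ¬ k < n := by simpa using hk
      simp [hs', hn, hempty]
    rw [h.unique h2, Finset.sum_range fun k => M (s' k)]
    exact Finset.sum_congr rfl fun k _ => by simp [hs', k.isLt]
  -- diagonal monotonicity
  have hdiagsum : ∀ (n : ℕ) (s : Fin n → Set Ω), (∀ k, MeasurableSet (s k)) →
      (∀ k, s k ⊆ ω) → Pairwise (Function.onFun Disjoint s) → ∀ p : Fin d,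
      ∑ k, (M (s k) p p).re ≤ (M ω p p).re := by
    intro n s hms hsub hds p
    set t : Set Ω := ω \ ⋃ k, s k with ht
    have hmt : MeasurableSet t := hω.diff (MeasurableSet.iUnion fun k => hms k)
    set g : Fin (n + 1) → Set Ω := Fin.cons t s with hg
    have hmg : ∀ k, MeasurableSet (g k) := by
      intro k
      refine Fin.cases ?_ ?_ k
      · exact hmt
      · exact hms
    have hts : ∀ k, Disjoint t (s k) :=
      fun k => Set.disjoint_left.mpr fun x hx hx2 => hx.2 (Set.mem_iUnion.mpr ⟨k, hx2⟩)
    have hdg : Pairwise (Function.onFun Disjoint g) := by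
      intro k l hkl
      revert hkl
      refine Fin.cases ?_ (fun k' => ?_) k <;> refine Fin.cases ?_ (fun l' => ?_) l <;>
        intro hkl
      · exact absurd rfl hkl
      · exact hts l'
      · exact (hts k').symm
      · exact hds fun h => hkl (congrArg Fin.succ h)
    have hUg : (⋃ k, g k) = ω := by
      ext x
      simp only [Set.mem_iUnion, hg]
      constructor
      · rintro ⟨k, hk⟩
        revert hk
        refine Fin.cases ?_ (fun k' => ?_) k
        · intro hk; exact hk.1
        · intro hk; exact hsub k' hk
      · intro hx
        by_cases h : x ∈ ⋃ k, s k
        · obtain ⟨k, hk⟩ := Set.mem_iUnion.mp h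
          exact ⟨k.succ, by simpa using hk⟩
        · exact ⟨0, by simp [ht, hx, h]⟩
    have hsum := hfin (n + 1) g hmg hdg
    rw [hUg] at hsum
    have hre : (M ω p p).re = (M t p p).re + ∑ k, (M (s k) p p).re := by
      rw [hsum, Fin.sum_univ_succ]
      simp [hg, Matrix.add_apply, Matrix.sum_apply, Complex.add_re, Complex.re_sum]
    rw [hre]
    have := hdiag t hmt p
    linarith
  -- main bound
  apply Real.sSup_le
  · rintro r ⟨n, s, hms, hsub, hds, rfl⟩
    have hterm : ∀ k, ‖M (s k) i j‖ ≤
        Real.sqrt ((M (s k) i i).re) * Real.sqrt ((M (s k) j j).re) := by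
      intro k
      have hpsd := (hpos (s k) (hms k)).submatrix ![i, j]
      have h := psd2_abs_le hpsd
      simpa [Matrix.submatrix_apply] using h
    calc ∑ k, ‖M (s k) i j‖
        ≤ ∑ k, Real.sqrt ((M (s k) i i).re) * Real.sqrt ((M (s k) j j).re) :=
          Finset.sum_le_sum fun k _ => hterm k
      _ ≤ Real.sqrt (∑ k, (M (s k) i i).re) * Real.sqrt (∑ k, (M (s k) j j).re) :=
          Real.sum_sqrt_mul_sqrt_le _ (fun k => hdiag _ (hms k) i)
            (fun k => hdiag _ (hms k) j)
      _ ≤ Real.sqrt ((M ω i i).re) * Real.sqrt ((M ω j j).re) := by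
          apply mul_le_mul
          · exact Real.sqrt_le_sqrt (hdiagsum n s hms hsub hds i)
          · exact Real.sqrt_le_sqrt (hdiagsum n s hms hsub hds j)
          · positivity
          · positivity
  · positivity
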